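/- If u : ℤ × ℤ → ℝ satisfies the dKdV equation and ũ : ℤ × ℤ → ℝ satisfies the Bäcklund transformation equations (ũ(k,l) - u(k,l+1))·(u(k,l) - ũ(k,l+1)) = θ - β and (ũ(k,l) - u(k+1,l))·(u(k,l) - ũ(k+1,l)) = θ - α for all k,l, with all differences ũ(k,l) - u(k,l+1) and ũ(k,l) - u(k+1,l) positive, then F(k,l) = -log(ũ(k,l) - u(k,l+1)) and G(k,l) = log(ũ(k,l) - u(k+1,l)) satisfy the conservation law G(k,l+1) - G(k,l) + F(k+1,l) - F(k,l) = 0. -/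
import Mathlib


/-- the Bäcklund transformation of dKdV yields a conservation law. -/
theorem dKdV_backlund_conservation_law (u ut : ℤ × ℤ → ℝ) (α β θ : ℝ)
    (hdkdv : ∀ k l : ℤ,
      (u (k, l) - u (k + 1, l + 1)) * (u (k + 1, l) - u (k, l + 1)) = α - β)
    (hBT1 : ∀ k l : ℤ,
      (ut (k, l) - u (k, l + 1)) * (u (k, l) - ut (k, l + 1)) = θ - β)
    (hBT2 : ∀ k l : ℤ,
      (ut (k, l) - u (k + 1, l)) * (u (k, l) - ut (k + 1, l)) = θ - α)
    (hpos1 : ∀ k l : ℤ, 0 < ut (k, l) - u (k, l + 1))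
    (hpos2 : ∀ k l : ℤ, 0 < ut (k, l) - u (k + 1, l))
    (F G : ℤ × ℤ → ℝ)
    (hF : ∀ k l : ℤ, F (k, l) = -Real.log (ut (k, l) - u (k, l + 1)))
    (hG : ∀ k l : ℤ, G (k, l) = Real.log (ut (k, l) - u (k + 1, l))) :
    ∀ k l : ℤ, G (k, l + 1) - G (k, l) + (F (k + 1, l) - F (k, l)) = 0 := by
  intro k l
  have ha : 0 < ut (k, l + 1) - u (k + 1, l + 1) := hpos2 k (l + 1)
  have hb : 0 < ut (k, l) - u (k + 1, l) := hpos2 k l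
  have hc : 0 < ut (k + 1, l) - u (k + 1, l + 1) := hpos1 (k + 1) l
  have hd : 0 < ut (k, l) - u (k, l + 1) := hpos1 k l
  have key : (ut (k, l + 1) - u (k + 1, l + 1)) * (ut (k, l) - u (k, l + 1))
      = (ut (k, l) - u (k + 1, l)) * (ut (k + 1, l) - u (k + 1, l + 1)) := by
    linear_combination hdkdv k l - hBT1 k l + hBT2 k l
  have hlog : Real.log (ut (k, l + 1) - u (k + 1, l + 1))
      + Real.log (ut (k, l) - u (k, l + 1))
      = Real.log (ut (k, l) - u (k + 1, l))
      + Real.log (ut (k + 1, l) - u (k + 1, l + 1)) := by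
    rw [← Real.log_mul ha.ne' hd.ne', ← Real.log_mul hb.ne' hc.ne', key]
  rw [hG k (l + 1), hG k l, hF (k + 1) l, hF k l]
  linarith [hlog]
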